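/- Let q, x ∈ ℂ with |q| < 1 and |x| < 1. Then E_q(x) ≠ 0, the series ∑_{n≥0} x^n / ((1−q)(1−q²)⋯(1−qⁿ)) converges absolutely (with the empty product for n = 0 equal to 1), and E_q(x)^{-1} = ∑_{n≥0} x^n / ((1−q)(1−q²)⋯(1−qⁿ)). -/

import Mathlib

open Finset Real Filter


/-- `1 - z ≠ 0` when `‖z‖ < 1`. -/
lemma qd_one_sub_ne {z : ℂ} (hz : ‖z‖ < 1) : (1 : ℂ) - z ≠ 0 := by
  intro h
  rw [sub_eq_zero] at h
  rw [← h] at hz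
  simp at hz

lemma qd_exp_le {r t : ℝ} (hr1 : r < 1) (ht0 : 0 ≤ t) (htr : t ≤ r) :
    Real.exp (-(t / (1 - r))) ≤ 1 - t := by
  have h1r : 0 < 1 - r := by linarith
  have h1t : 0 < 1 - t := by linarith
  have h1 : 1 + t / (1 - r) ≤ Real.exp (t / (1 - r)) := by
    have := Real.add_one_le_exp (t / (1 - r))
    linarith
  have h2 : (1 - t)⁻¹ ≤ 1 + t / (1 - r) := by
    rw [inv_le_iff_one_le_mul₀ h1t]
    have : t / (1 - t) ≤ t / (1 - r) := by
      apply div_le_div_of_nonneg_left ht0 h1r (by linarith)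
    have h3 : (1 + t / (1 - t)) * (1 - t) = 1 := by field_simp; ring
    nlinarith [h1t.le]
  have h3 : (1 - t)⁻¹ ≤ Real.exp (t / (1 - r)) := le_trans h2 h1
  rw [Real.exp_neg]
  rw [inv_le_comm₀ (Real.exp_pos _) h1t]
  exact h3

/-- lower bound for the partial products of `‖1 - q^(i+1)‖`. -/
lemma qd_prod_lb (q : ℂ) (hq : ‖q‖ < 1) (n : ℕ) :
    Real.exp (-(‖q‖ / (1 - ‖q‖) ^ 2)) ≤ ∏ i ∈ Finset.range n, ‖1 - q ^ (i + 1)‖ := by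
  set r := ‖q‖ with hr
  have hr0 : 0 ≤ r := norm_nonneg q
  have h1r : 0 < 1 - r := by linarith
  have hpow : ∀ i : ℕ, r ^ (i + 1) ≤ r := fun i => by
    calc r ^ (i + 1) ≤ r ^ 1 := pow_le_pow_of_le_one hr0 hq.le (by omega)
    _ = r := pow_one r
  have hpow0 : ∀ i : ℕ, 0 ≤ r ^ (i + 1) := fun i => pow_nonneg hr0 _
  calc Real.exp (-(r / (1 - r) ^ 2))
      ≤ ∏ i ∈ Finset.range n, Real.exp (-(r ^ (i + 1) / (1 - r))) := by
        rw [← Real.exp_sum]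
        apply Real.exp_le_exp.2
        have hs : ∑ i ∈ Finset.range n, -(r ^ (i + 1) / (1 - r))
            = -((∑ i ∈ Finset.range n, r ^ (i + 1)) / (1 - r)) := by
          rw [Finset.sum_div]
          exact Finset.sum_neg_distrib (f := fun i => r ^ (i + 1) / (1 - r))
        rw [hs]
        have hgeo : ∑ i ∈ Finset.range n, r ^ (i + 1) ≤ r / (1 - r) := by
          have h1 : ∑ i ∈ Finset.range n, r ^ (i + 1) ≤ ∑' i : ℕ, r ^ (i + 1) := by
            apply Summable.sum_le_tsum _ (fun i _ => hpow0 i)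
            exact ((summable_geometric_of_lt_one hr0 hq).mul_left r).congr
              (fun i => by rw [pow_succ, mul_comm])
          have h2 : ∑' i : ℕ, r ^ (i + 1) = r / (1 - r) := by
            have : ∑' i : ℕ, r ^ (i + 1) = r * ∑' i : ℕ, r ^ i := by
              rw [← tsum_mul_left]
              exact tsum_congr fun i => by rw [pow_succ, mul_comm]
            rw [this, tsum_geometric_of_lt_one hr0 hq, div_eq_mul_inv]
          linarith
        rw [neg_le_neg_iff]
        calc (∑ i ∈ Finset.range n, r ^ (i + 1)) / (1 - r) ≤ (r / (1 - r)) / (1 - r) := by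
              exact (div_le_div_iff_of_pos_right h1r).2 hgeo
        _ = r / (1 - r) ^ 2 := by rw [div_div, sq]
    _ ≤ ∏ i ∈ Finset.range n, (1 - r ^ (i + 1)) := by
        apply Finset.prod_le_prod (fun i _ => (Real.exp_pos _).le)
        exact fun i _ => qd_exp_le hq (hpow0 i) (hpow i)
    _ ≤ ∏ i ∈ Finset.range n, ‖1 - q ^ (i + 1)‖ := by
        apply Finset.prod_le_prod
        · intro i _
          have : r ^ (i + 1) ≤ 1 := le_trans (hpow i) hq.le
          linarith
        · intro i _
          calc 1 - r ^ (i + 1) = ‖(1 : ℂ)‖ - ‖q ^ (i + 1)‖ := by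
                rw [norm_one, norm_pow]
          _ ≤ ‖1 - q ^ (i + 1)‖ := norm_sub_norm_le _ _

/-- norm lower bound for `Q n = ∏ (1 - q^(i+1))`. -/
lemma qd_Q_lb (q : ℂ) (hq : ‖q‖ < 1) (n : ℕ) :
    Real.exp (-(‖q‖ / (1 - ‖q‖) ^ 2)) ≤ ‖∏ i ∈ Finset.range n, (1 - q ^ (i + 1))‖ := by
  rw [norm_prod]
  exact qd_prod_lb q hq n

lemma qd_Q_ne (q : ℂ) (hq : ‖q‖ < 1) (n : ℕ) :
    (∏ i ∈ Finset.range n, (1 - q ^ (i + 1))) ≠ 0 := by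
  intro h
  have := qd_Q_lb q hq n
  rw [h, norm_zero] at this
  exact absurd this (not_le.2 (Real.exp_pos _))

lemma qd_term_le (q : ℂ) (hq : ‖q‖ < 1) (y : ℂ) (n : ℕ) :
    ‖y ^ n / ∏ i ∈ Finset.range n, (1 - q ^ (i + 1))‖
      ≤ (Real.exp (-(‖q‖ / (1 - ‖q‖) ^ 2)))⁻¹ * ‖y‖ ^ n := by
  set c := Real.exp (-(‖q‖ / (1 - ‖q‖) ^ 2)) with hc
  have hc0 : 0 < c := Real.exp_pos _
  have hQ := qd_Q_lb q hq n
  rw [norm_div, norm_pow]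
  rw [div_le_iff₀ (lt_of_lt_of_le hc0 hQ)]
  calc c⁻¹ * ‖y‖ ^ n * ‖∏ i ∈ Finset.range n, (1 - q ^ (i + 1))‖
      ≥ c⁻¹ * ‖y‖ ^ n * c := by
        apply mul_le_mul_of_nonneg_left hQ (by positivity)
    _ = ‖y‖ ^ n := by field_simp
  
lemma qd_summable_norm (q : ℂ) (hq : ‖q‖ < 1) {y : ℂ} (hy : ‖y‖ < 1) :
    Summable fun n : ℕ => ‖y ^ n / ∏ i ∈ Finset.range n, (1 - q ^ (i + 1))‖ := by
  apply Summable.of_nonneg_of_le (fun n => norm_nonneg _) (qd_term_le q hq y)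
  exact (summable_geometric_of_lt_one (norm_nonneg y) hy).mul_left _

lemma qd_summable (q : ℂ) (hq : ‖q‖ < 1) {y : ℂ} (hy : ‖y‖ < 1) :
    Summable fun n : ℕ => y ^ n / ∏ i ∈ Finset.range n, (1 - q ^ (i + 1)) :=
  (qd_summable_norm q hq hy).of_norm

/-- functional equation for the sum. -/
lemma qd_S_func (q : ℂ) (hq : ‖q‖ < 1) {y : ℂ} (hy : ‖y‖ < 1) :
    ∑' n : ℕ, (q * y) ^ n / ∏ i ∈ Finset.range n, (1 - q ^ (i + 1))
      = (1 - y) * ∑' n : ℕ, y ^ n / ∏ i ∈ Finset.range n, (1 - q ^ (i + 1)) := by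
  set Q : ℕ → ℂ := fun n => ∏ i ∈ Finset.range n, (1 - q ^ (i + 1)) with hQ
  have hqy : ‖q * y‖ < 1 := by
    rw [norm_mul]
    nlinarith [norm_nonneg q, norm_nonneg y]
  have ha : Summable fun n : ℕ => y ^ n / Q n := qd_summable q hq hy
  have hb : Summable fun n : ℕ => (q * y) ^ n / Q n := qd_summable q hq hqy
  have hd : Summable fun n : ℕ => y ^ n * (1 - q ^ n) / Q n := by
    apply (ha.sub hb).congr
    intro n
    rw [mul_pow]
    ring
  have h1 : ∑' n : ℕ, y ^ n * (1 - q ^ n) / Q n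
      = (∑' n : ℕ, y ^ n / Q n) - ∑' n : ℕ, (q * y) ^ n / Q n := by
    rw [← Summable.tsum_sub ha hb]
    apply tsum_congr
    intro n
    rw [mul_pow]
    ring
  have h2 : ∑' n : ℕ, y ^ n * (1 - q ^ n) / Q n
      = y * ∑' n : ℕ, y ^ n / Q n := by
    rw [Summable.tsum_eq_zero_add hd]
    have h0 : y ^ 0 * (1 - q ^ 0) / Q 0 = 0 := by simp
    rw [h0, zero_add]
    rw [← tsum_mul_left]
    apply tsum_congr
    intro n
    have hfac : (1 : ℂ) - q ^ (n + 1) ≠ 0 := by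
      apply qd_one_sub_ne
      rw [norm_pow]
      exact pow_lt_one₀ (norm_nonneg q) hq (by omega)
    have hQs : Q (n + 1) = Q n * (1 - q ^ (n + 1)) := Finset.prod_range_succ _ _
    rw [hQs]
    field_simp [qd_Q_ne q hq n]
    ring
  rw [h1] at h2
  show ∑' n : ℕ, (q * y) ^ n / Q n = (1 - y) * ∑' n : ℕ, y ^ n / Q n
  linear_combination -h2

lemma qd_fac_norm_lt (q : ℂ) (hq : ‖q‖ < 1) {y : ℂ} (hy : ‖y‖ < 1) (k : ℕ) :
    ‖q ^ k * y‖ < 1 := by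
  rw [norm_mul, norm_pow]
  calc ‖q‖ ^ k * ‖y‖ ≤ 1 * ‖y‖ := by
        apply mul_le_mul_of_nonneg_right (pow_le_one₀ (norm_nonneg q) hq.le) (norm_nonneg y)
  _ = ‖y‖ := one_mul _
  _ < 1 := hy

lemma qd_log_summable (q : ℂ) (hq : ‖q‖ < 1) {y : ℂ} (hy : ‖y‖ < 1) :
    Summable fun k : ℕ => Complex.log (1 - q ^ k * y) := by
  apply Summable.of_norm_bounded_eventually (g := fun k : ℕ => 3 / 2 * (‖q‖ ^ k * ‖y‖))
  · exact (((summable_geometric_of_lt_one (norm_nonneg q) hq).mul_right _).mul_left _)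
  · rw [Nat.cofinite_eq_atTop]
    have htend : Filter.Tendsto (fun k : ℕ => ‖q‖ ^ k * ‖y‖) Filter.atTop (nhds 0) := by
      simpa using (tendsto_pow_atTop_nhds_zero_of_lt_one (norm_nonneg q) hq).mul_const ‖y‖
    filter_upwards [htend.eventually_le_const (by norm_num : (0:ℝ) < 1/2)] with k hk
    have h2 : ‖-(q ^ k * y)‖ ≤ 1 / 2 := by
      rw [norm_neg, norm_mul, norm_pow]
      exact hk
    have := Complex.norm_log_one_add_half_le_self h2
    rw [show (1 : ℂ) + -(q ^ k * y) = 1 - q ^ k * y by ring] at this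
    calc ‖Complex.log (1 - q ^ k * y)‖ ≤ 3 / 2 * ‖-(q ^ k * y)‖ := this
    _ = 3 / 2 * (‖q‖ ^ k * ‖y‖) := by rw [norm_neg, norm_mul, norm_pow]

lemma qd_prod_ne_and_mult (q : ℂ) (hq : ‖q‖ < 1) {y : ℂ} (hy : ‖y‖ < 1) :
    (∏' k : ℕ, (1 - q ^ k * y)) ≠ 0 ∧ Multipliable fun k : ℕ => (1 - q ^ k * y) := by
  set f : ℕ → Unit → ℂ := fun k _ => 1 - q ^ k * y with hf
  have hfn : ∀ (u : Unit) (k : ℕ), f k u ≠ 0 :=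
    fun _ k => qd_one_sub_ne (qd_fac_norm_lt q hq hy k)
  have hsl : ∀ _ : Unit, Summable fun k => Complex.log (f k ()) :=
    fun _ => qd_log_summable q hq hy
  constructor
  · have := Complex.cexp_tsum_eq_tprod (f := fun k => 1 - q ^ k * y) (fun k => hfn () k) (hsl ())
    rw [← this]
    exact Complex.exp_ne_zero _
  · exact Complex.multipliable_of_summable_log (hsl ())

lemma qd_S_telescope (q x : ℂ) (hq : ‖q‖ < 1) (hx : ‖x‖ < 1) (n : ℕ) :
    ∑' m : ℕ, (q ^ n * x) ^ m / ∏ i ∈ Finset.range m, (1 - q ^ (i + 1))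
      = (∏ k ∈ Finset.range n, (1 - q ^ k * x)) *
        ∑' m : ℕ, x ^ m / ∏ i ∈ Finset.range m, (1 - q ^ (i + 1)) := by
  induction n with
  | zero => simp
  | succ n ih =>
    have harg : (q ^ (n + 1) * x) = q * (q ^ n * x) := by ring
    rw [harg, qd_S_func q hq (qd_fac_norm_lt q hq hx n), ih, Finset.prod_range_succ]
    ring

lemma qd_S_sub_one (q : ℂ) (hq : ‖q‖ < 1) {x y : ℂ} (hx : ‖x‖ < 1) (hyx : ‖y‖ ≤ ‖x‖) :
    ‖(∑' n : ℕ, y ^ n / ∏ i ∈ Finset.range n, (1 - q ^ (i + 1))) - 1‖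
      ≤ (Real.exp (-(‖q‖ / (1 - ‖q‖) ^ 2)))⁻¹ * (1 - ‖x‖)⁻¹ * ‖y‖ := by
  set c := Real.exp (-(‖q‖ / (1 - ‖q‖) ^ 2)) with hc
  have hc0 : 0 < c := Real.exp_pos _
  have hy : ‖y‖ < 1 := lt_of_le_of_lt hyx hx
  set Q : ℕ → ℂ := fun n => ∏ i ∈ Finset.range n, (1 - q ^ (i + 1)) with hQ
  have h0 : y ^ 0 / Q 0 = 1 := by simp [hQ]
  rw [Summable.tsum_eq_zero_add (qd_summable q hq hy), h0, add_sub_cancel_left]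
  have hsn : Summable fun n : ℕ => ‖y ^ (n + 1) / Q (n + 1)‖ :=
    (summable_nat_add_iff 1).mpr (qd_summable_norm q hq hy)
  have hgeo : Summable fun n : ℕ => c⁻¹ * ‖y‖ ^ (n + 1) := by
    apply Summable.mul_left
    exact (summable_nat_add_iff 1).mpr (summable_geometric_of_lt_one (norm_nonneg y) hy)
  calc ‖∑' n : ℕ, y ^ (n + 1) / Q (n + 1)‖
      ≤ ∑' n : ℕ, ‖y ^ (n + 1) / Q (n + 1)‖ := norm_tsum_le_tsum_norm hsn
    _ ≤ ∑' n : ℕ, c⁻¹ * ‖y‖ ^ (n + 1) := by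
        apply Summable.tsum_le_tsum (fun n => qd_term_le q hq y (n + 1)) hsn hgeo
    _ = c⁻¹ * ‖y‖ * ∑' n : ℕ, ‖y‖ ^ n := by
        rw [← tsum_mul_left]
        rw [show (fun n : ℕ => c⁻¹ * ‖y‖ * ‖y‖ ^ n) = fun n : ℕ => c⁻¹ * ‖y‖ ^ (n + 1) by
          funext n; rw [pow_succ]; ring]
    _ = c⁻¹ * ‖y‖ * (1 - ‖y‖)⁻¹ := by
        rw [tsum_geometric_of_lt_one (norm_nonneg y) hy]
    _ ≤ c⁻¹ * (1 - ‖x‖)⁻¹ * ‖y‖ := by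
        rw [show c⁻¹ * ‖y‖ * (1 - ‖y‖)⁻¹ = c⁻¹ * (1 - ‖y‖)⁻¹ * ‖y‖ by ring]
        apply mul_le_mul_of_nonneg_right _ (norm_nonneg y)
        apply mul_le_mul_of_nonneg_left _ (by positivity)
        apply inv_anti₀ (by linarith) (by linarith)

open Finset in
/-- Let `q, x ∈ ℂ` with `|q| < 1` and `|x| < 1`.  Then
`E_q(x) = ∏_{k≥0}(1 − qᵏ x)` is nonzero, the series
`∑_{n≥0} xⁿ / ((1−q)(1−q²)⋯(1−qⁿ))` converges absolutely (the empty product for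
`n = 0` being `1`), and `E_q(x)⁻¹` equals this sum. -/
theorem quantum_dilog_inverse_series (q x : ℂ) (hq : ‖q‖ < 1) (hx : ‖x‖ < 1) :
    (∏' k : ℕ, (1 - q ^ k * x)) ≠ 0 ∧
      (Summable fun n : ℕ => ‖x ^ n / ∏ i ∈ Finset.range n, (1 - q ^ (i + 1))‖) ∧
      (∏' k : ℕ, (1 - q ^ k * x))⁻¹ =
        ∑' n : ℕ, x ^ n / ∏ i ∈ Finset.range n, (1 - q ^ (i + 1)) := by
  obtain ⟨hPne, hM⟩ := qd_prod_ne_and_mult q hq hx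
  refine ⟨hPne, qd_summable_norm q hq hx, ?_⟩
  set S : ℂ := ∑' n : ℕ, x ^ n / ∏ i ∈ Finset.range n, (1 - q ^ (i + 1)) with hS
  set P : ℂ := ∏' k : ℕ, (1 - q ^ k * x) with hP
  -- the partial products tend to P
  have hA : Filter.Tendsto (fun n : ℕ => (∏ k ∈ Finset.range n, (1 - q ^ k * x)) * S)
      Filter.atTop (nhds (P * S)) :=
    (hM.hasProd.tendsto_prod_nat).mul_const S
  -- the same sequence equals S (q^n x), which tends to 1
  have hC : Filter.Tendsto
      (fun n : ℕ => ∑' m : ℕ, (q ^ n * x) ^ m / ∏ i ∈ Finset.range m, (1 - q ^ (i + 1)))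
      Filter.atTop (nhds 1) := by
    rw [tendsto_iff_norm_sub_tendsto_zero]
    apply squeeze_zero (fun n => norm_nonneg _)
      (g := fun n : ℕ => (Real.exp (-(‖q‖ / (1 - ‖q‖) ^ 2)))⁻¹ * (1 - ‖x‖)⁻¹ * (‖q‖ ^ n * ‖x‖))
    · intro n
      have hyx : ‖q ^ n * x‖ ≤ ‖x‖ := by
        rw [norm_mul, norm_pow]
        calc ‖q‖ ^ n * ‖x‖ ≤ 1 * ‖x‖ :=
              mul_le_mul_of_nonneg_right (pow_le_one₀ (norm_nonneg q) hq.le) (norm_nonneg x)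
        _ = ‖x‖ := one_mul _
      have := qd_S_sub_one q hq hx hyx
      rwa [norm_mul, norm_pow] at this
    · have : Filter.Tendsto (fun n : ℕ => ‖q‖ ^ n * ‖x‖) Filter.atTop (nhds 0) := by
        simpa using (tendsto_pow_atTop_nhds_zero_of_lt_one (norm_nonneg q) hq).mul_const ‖x‖
      simpa using this.const_mul ((Real.exp (-(‖q‖ / (1 - ‖q‖) ^ 2)))⁻¹ * (1 - ‖x‖)⁻¹)
  have heq : (fun n : ℕ =>
      ∑' m : ℕ, (q ^ n * x) ^ m / ∏ i ∈ Finset.range m, (1 - q ^ (i + 1)))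
      = fun n : ℕ => (∏ k ∈ Finset.range n, (1 - q ^ k * x)) * S := by
    funext n
    exact qd_S_telescope q x hq hx n
  rw [heq] at hC
  have hPS : P * S = 1 := tendsto_nhds_unique hA hC
  exact inv_eq_of_mul_eq_one_right hPS
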